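/- (Strict comparison) Under the comparison theorem hypotheses with strict inequality in assumption (iii) unless e_i^* Z^1_t ∼_{M_{t+1}} e_i^* Z^2_t: if Y^1_t = Y^2_t a.s. on some A ∈ F_t, then on A a.s.: Q^1 = Q^2, and for all s in {t,...,T}: F^1(ω,s,Y^2_s,Z^2_s) = F^2(ω,s,Y^2_s,Z^2_s), Z^1_s ∼_{M_{s+1}} Z^2_s, and Y^1_s = Y^2_s. -/

import Mathlib

open MeasureTheory

/-- `Jmin p d` is `min_{j ∈ J} (e_j - p)·d = min_{j : p j > 0} (d j - ⟨d, p⟩)`, the minimum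
over the indices `j` of positive conditional probability of
`e_i^*(Z¹-Z²)(e_j - E[X_{t+1}|𝓕 t])` with `d` the relevant row of `Z¹ - Z²` and
`p = E[X_{t+1}|𝓕 t]`. -/
noncomputable def Jmin {N : ℕ} (p d : Fin N → ℝ) : ℝ :=
  sInf {a : ℝ | ∃ j, 0 < p j ∧ a = d j - ∑ l, d l * p l}

lemma Jmin_bddBelow {N : ℕ} (p d : Fin N → ℝ) :
    BddBelow {a : ℝ | ∃ j, 0 < p j ∧ a = d j - ∑ l, d l * p l} := by
  apply (Set.finite_range (fun j => d j - ∑ l, d l * p l)).bddBelow.mono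
  rintro a ⟨j, _, rfl⟩; exact ⟨j, rfl⟩

lemma Jmin_le {N : ℕ} {p d : Fin N → ℝ} {j : Fin N} (hj : 0 < p j) :
    Jmin p d ≤ d j - ∑ l, d l * p l :=
  csInf_le (Jmin_bddBelow p d) ⟨j, hj, rfl⟩

lemma Jmin_eq {N : ℕ} {p d : Fin N → ℝ} {j : Fin N} (hj : 0 < p j)
    (hmin : ∀ l, 0 < p l → d j ≤ d l) :
    Jmin p d = d j - ∑ l, d l * p l := by
  refine le_antisymm (Jmin_le hj) (le_csInf ⟨_, j, hj, rfl⟩ ?_)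
  rintro a ⟨l, hl, rfl⟩
  have := hmin l hl; linarith

lemma exists_mem_of_ae {Ω : Type*} {m0 : MeasurableSpace Ω} {μ : Measure Ω}
    {D : Set Ω} (hD : μ D ≠ 0) {P : Ω → Prop} (h : ∀ᵐ ω ∂μ, P ω) :
    ∃ ω ∈ D, P ω := by
  have h1 : μ (D ∩ {ω | P ω}) ≠ 0 := by
    intro h0
    apply hD
    have h2 : μ D ≤ μ (D ∩ {ω | P ω}) + μ {ω | ¬ P ω} := by
      refine le_trans (measure_mono ?_) (measure_union_le _ _)
      intro ω hω
      by_cases hP : P ω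
      · exact Or.inl ⟨hω, hP⟩
      · exact Or.inr hP
    rw [h0, ae_iff.mp h] at h2
    simpa using h2
  obtain ⟨ω, hω⟩ := nonempty_of_measure_ne_zero h1
  exact ⟨ω, hω.1, hω.2⟩

lemma setIntegral_eval_condexp {Ω : Type*} {m : MeasurableSpace Ω} {m0 : MeasurableSpace Ω}
    {μ : Measure Ω} [IsProbabilityMeasure μ] {N : ℕ} (hm : m ≤ m0)
    {X : Ω → Fin N → ℝ} (hXint : Integrable X μ) (j : Fin N)
    {E : Set Ω} (hE : MeasurableSet[m] E) :
    ∫ ω in E, X ω j ∂μ = ∫ ω in E, (μ[X|m]) ω j ∂μ := by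
  have h1 : ∫ ω in E, (μ[X|m]) ω ∂μ = ∫ ω in E, X ω ∂μ := setIntegral_condExp hm hXint hE
  let L : (Fin N → ℝ) →L[ℝ] ℝ := ContinuousLinearMap.proj j
  have h2 : ∫ ω in E, L (X ω) ∂μ = L (∫ ω in E, X ω ∂μ) :=
    L.integral_comp_comm hXint.integrableOn
  have h3 : ∫ ω in E, L ((μ[X|m]) ω) ∂μ = L (∫ ω in E, (μ[X|m]) ω ∂μ) :=
    L.integral_comp_comm integrable_condExp.integrableOn
  simp only [L, ContinuousLinearMap.proj_apply] at h2 h3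
  rw [h2, ← h1, ← h3]

lemma ae_condexp_pos {Ω : Type*} {m : MeasurableSpace Ω} {m0 : MeasurableSpace Ω}
    {μ : Measure Ω} [IsProbabilityMeasure μ] {N : ℕ} (hm : m ≤ m0)
    {X : Ω → Fin N → ℝ} (hXint : Integrable X μ)
    (hX01 : ∀ᵐ ω ∂μ, ∀ j, X ω j = 0 ∨ X ω j = 1) :
    ∀ᵐ ω ∂μ, ∀ j, X ω j = 1 → 0 < (μ[X|m]) ω j := by
  rw [ae_all_iff]
  intro j
  set p := μ[X|m] with hp
  have hpSM : StronglyMeasurable[m] p := stronglyMeasurable_condExp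
  have hpmM : Measurable[m] p := hpSM.measurable
  have hpm : Measurable[m] fun ω => p ω j := (measurable_pi_apply j).comp hpmM
  set E : Set Ω := {ω | p ω j ≤ 0} with hE
  have hEm : MeasurableSet[m] E := measurableSet_le hpm measurable_const
  have hXjint : Integrable (fun ω => X ω j) μ :=
    (ContinuousLinearMap.proj (R := ℝ) (φ := fun _ : Fin N => ℝ) j).integrable_comp hXint
  have hnn : ∀ᵐ ω ∂μ, 0 ≤ X ω j := by
    filter_upwards [hX01] with ω h
    rcases h j with h' | h' <;> rw [h'] <;> norm_num
  have hXj0 : ∀ᵐ ω ∂μ, ω ∈ E → X ω j = 0 := by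
    have hint : ∫ ω in E, X ω j ∂μ = ∫ ω in E, p ω j ∂μ :=
      setIntegral_eval_condexp hm hXint j hEm
    have hle : ∫ ω in E, p ω j ∂μ ≤ 0 :=
      setIntegral_nonpos (hm E hEm) (fun ω hω => hω)
    have hge : 0 ≤ ∫ ω in E, X ω j ∂μ :=
      setIntegral_nonneg_ae (hm E hEm) (by filter_upwards [hnn] with ω h _; exact h)
    have hzero : ∫ ω in E, X ω j ∂μ = 0 := le_antisymm (hint ▸ hle) hge
    have h4 := (integral_eq_zero_iff_of_nonneg_ae
      (ae_restrict_of_ae hnn) hXjint.integrableOn).mp hzero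
    have h5 := (ae_restrict_iff' (hm E hEm)).mp h4
    filter_upwards [h5] with ω h hω
    exact h hω
  filter_upwards [hXj0] with ω h h1
  by_contra hc
  have hmem : ω ∈ E := not_lt.mp hc
  rw [h hmem] at h1; norm_num at h1

lemma exists_argmin_event {Ω : Type*} {m : MeasurableSpace Ω} {m0 : MeasurableSpace Ω}
    {μ : Measure Ω} [IsProbabilityMeasure μ] {N : ℕ} (hm : m ≤ m0)
    {X : Ω → Fin N → ℝ} (hXint : Integrable X μ)
    (hX01 : ∀ᵐ ω ∂μ, ∀ j, X ω j = 0 ∨ X ω j = 1)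
    (hXex : ∀ᵐ ω ∂μ, ∃ j, X ω j = 1)
    {d : Ω → Fin N → ℝ} (hd : ∀ j, Measurable[m] fun ω => d ω j)
    {C : Set Ω} (hC : MeasurableSet[m] C) (hCpos : μ C ≠ 0) :
    ∃ j : Fin N, μ {ω | ω ∈ C ∧ 0 < (μ[X|m]) ω j ∧
        (∀ l, 0 < (μ[X|m]) ω l → d ω j ≤ d ω l) ∧ X ω j = 1} ≠ 0 := by
  set p := μ[X|m] with hp
  have hpSM : StronglyMeasurable[m] p := stronglyMeasurable_condExp
  have hpmM : Measurable[m] p := hpSM.measurable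
  have hpm : ∀ j, Measurable[m] fun ω => p ω j := fun j => (measurable_pi_apply j).comp hpmM
  by_contra hcon
  push_neg at hcon
  set Cj : Fin N → Set Ω := fun j =>
    C ∩ ({ω | 0 < p ω j} ∩ ⋂ l, {ω | 0 < p ω l → d ω j ≤ d ω l}) with hCjdef
  have hCjm : ∀ j, MeasurableSet[m] (Cj j) := by
    intro j
    refine hC.inter ((measurableSet_lt measurable_const (hpm j)).inter
      (MeasurableSet.iInter fun l => ?_))
    have : {ω | 0 < p ω l → d ω j ≤ d ω l}
        = {ω | 0 < p ω l}ᶜ ∪ {ω | d ω j ≤ d ω l} := by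
      ext ω; simp [imp_iff_not_or]
    rw [this]
    exact ((measurableSet_lt measurable_const (hpm l)).compl).union
      (measurableSet_le (hd j) (hd l))
  have hCjnull : ∀ j, μ (Cj j) = 0 := by
    intro j
    have h0 := hcon j
    have hXj0 : ∀ᵐ ω ∂μ, ω ∈ Cj j → X ω j = 0 := by
      have hnm : ∀ᵐ ω ∂μ, ω ∉ {ω | ω ∈ C ∧ 0 < p ω j ∧
          (∀ l, 0 < p ω l → d ω j ≤ d ω l) ∧ X ω j = 1} :=
        (measure_eq_zero_iff_ae_notMem (μ := μ)).mp h0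
      filter_upwards [hnm, hX01] with ω hn h01 hmem
      rcases h01 j with h' | h'
      · exact h'
      · exfalso
        simp only [hCjdef, Set.mem_inter_iff, Set.mem_setOf_eq, Set.mem_iInter] at hmem
        exact hn ⟨hmem.1, hmem.2.1, fun l hl => hmem.2.2 l hl, h'⟩
    have hint : ∫ ω in Cj j, X ω j ∂μ = ∫ ω in Cj j, p ω j ∂μ :=
      setIntegral_eval_condexp hm hXint j (hCjm j)
    have hz : ∫ ω in Cj j, X ω j ∂μ = 0 := by
      rw [setIntegral_congr_ae (hm _ (hCjm j)) (g := fun _ => (0:ℝ))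
        (by filter_upwards [hXj0] with ω h hω; exact h hω)]
      simp
    have hpz : ∫ ω in Cj j, p ω j ∂μ = 0 := by rw [← hint, hz]
    by_contra hne
    have hpos : 0 < μ (Cj j) := by
      rcases (Ne.lt_or_gt hne) with h | h
      · exact absurd h (by simp)
      · exact h
    have hsup : 0 < μ (Function.support (fun ω => p ω j) ∩ Cj j) := by
      refine lt_of_lt_of_le hpos (measure_mono ?_)
      intro ω hω
      refine ⟨?_, hω⟩
      have hlt : 0 < p ω j := hω.2.1
      exact ne_of_gt hlt
    have hnnres : 0 ≤ᵐ[μ.restrict (Cj j)] fun ω => p ω j := by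
      refine (ae_restrict_iff' (hm _ (hCjm j))).mpr ?_
      filter_upwards with ω hω
      exact le_of_lt hω.2.1
    have hpj_int : Integrable (fun ω => p ω j) μ :=
      (ContinuousLinearMap.proj (R := ℝ) (φ := fun _ : Fin N => ℝ) j).integrable_comp
        integrable_condExp
    have hfin := (setIntegral_pos_iff_support_of_nonneg_ae hnnres
      hpj_int.integrableOn).mpr hsup
    rw [hpz] at hfin
    exact lt_irrefl _ hfin
  have hcover : ∀ᵐ ω ∂μ, ω ∈ C → ω ∈ ⋃ j, Cj j := by
    filter_upwards [hXex, hX01, ae_condexp_pos hm hXint hX01] with ω hex h01 hpos hωC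
    obtain ⟨j0, hj0⟩ := hex
    have hj0p : 0 < p ω j0 := hpos j0 hj0
    obtain ⟨j, hjmem, hjmin⟩ := Finset.exists_min_image
      (Finset.univ.filter fun l => 0 < p ω l) (fun l => d ω l)
      ⟨j0, by simp [hj0p]⟩
    refine Set.mem_iUnion.mpr ⟨j, hωC, ?_, ?_⟩
    · simpa using hjmem
    · exact Set.mem_iInter.mpr fun l hl => hjmin l (by simp [hl])
  have hCnull : μ C = 0 := by
    have hU : μ (⋃ j, Cj j) = 0 := measure_iUnion_null hCjnull
    have hdiff : μ (C \ ⋃ j, Cj j) = 0 := by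
      refine measure_mono_null ?_ (ae_iff.mp hcover)
      intro ω hω
      simp only [Set.mem_setOf_eq]
      intro hc
      exact hω.2 (hc hω.1)
    have hmono := measure_mono_ae (ae_le_set.mpr hdiff)
    rw [hU] at hmono
    exact le_antisymm hmono (zero_le)
  exact hCpos hCnull

/-- strict comparison for discrete BSDEs. -/
theorem strict_comparison_theorem
    {Ω : Type*} {m0 : MeasurableSpace Ω} {μ : Measure Ω} [IsProbabilityMeasure μ]
    {N K T : ℕ} (𝓕 : Filtration ℕ m0)
    (X : ℕ → Ω → (Fin N → ℝ))
    (hXval : ∀ t ω, ∃ i : Fin N, X t ω = fun j => if j = i then (1 : ℝ) else 0)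
    (h𝓕 : ∀ t, (𝓕 t : MeasurableSpace Ω)
      = MeasurableSpace.comap (fun ω (s : Fin (t + 1)) => X (s : ℕ) ω) inferInstance)
    (hXint : ∀ t, Integrable (X t) μ)
    (M : ℕ → Ω → (Fin N → ℝ))
    (hM : ∀ t, M t = X t - μ[X t | 𝓕 (t - 1)])
    (F1 F2 : Ω → ℕ → (Fin K → ℝ) → (Fin K → Fin N → ℝ) → (Fin K → ℝ))
    -- both drivers satisfy the conditions of the existence theorem
    (hFmeas : ∀ F' ∈ [F1, F2], ∀ t < T, ∀ (Y : Ω → Fin K → ℝ) (Z : Ω → Fin K → Fin N → ℝ),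
      StronglyMeasurable[𝓕 t] Y → StronglyMeasurable[𝓕 t] Z →
      StronglyMeasurable[𝓕 t] (fun ω => F' ω t (Y ω) (Z ω)))
    (hFinv : ∀ F' ∈ [F1, F2], ∀ t < T,
      ∀ (Y : Ω → Fin K → ℝ) (Za Zb : Ω → Fin K → Fin N → ℝ),
      (∀ᵐ ω ∂μ, (fun i => ∑ j, Za ω i j * M (t + 1) ω j)
          = (fun i => ∑ j, Zb ω i j * M (t + 1) ω j)) →
      ∀ᵐ ω ∂μ, F' ω t (Y ω) (Za ω) = F' ω t (Y ω) (Zb ω))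
    (hFbij : ∀ F' ∈ [F1, F2], ∀ t < T, ∀ Z : Ω → Fin K → Fin N → ℝ,
      ∀ᵐ ω ∂μ, Function.Bijective (fun y : Fin K → ℝ => y - F' ω t y (Z ω)))
    -- the two solutions
    (Q1 Q2 : Ω → Fin K → ℝ)
    (hQ1meas : StronglyMeasurable[𝓕 T] Q1) (hQ2meas : StronglyMeasurable[𝓕 T] Q2)
    (Y1 Y2 : ℕ → Ω → Fin K → ℝ) (Z1 Z2 : ℕ → Ω → Fin K → Fin N → ℝ)
    (hY1 : ∀ t, StronglyMeasurable[𝓕 t] (Y1 t)) (hZ1 : ∀ t, StronglyMeasurable[𝓕 t] (Z1 t))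
    (hY2 : ∀ t, StronglyMeasurable[𝓕 t] (Y2 t)) (hZ2 : ∀ t, StronglyMeasurable[𝓕 t] (Z2 t))
    (hsol1 : ∀ t ≤ T, ∀ᵐ ω ∂μ,
      Y1 t ω - ∑ u ∈ Finset.Ico t T, F1 ω u (Y1 u ω) (Z1 u ω)
        + ∑ u ∈ Finset.Ico t T, (fun i => ∑ j, Z1 u ω i j * M (u + 1) ω j) = Q1 ω)
    (hsol2 : ∀ t ≤ T, ∀ᵐ ω ∂μ,
      Y2 t ω - ∑ u ∈ Finset.Ico t T, F2 ω u (Y2 u ω) (Z2 u ω)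
        + ∑ u ∈ Finset.Ico t T, (fun i => ∑ j, Z2 u ω i j * M (u + 1) ω j) = Q2 ω)
    -- (i) Q¹ ≥ Q² a.s.
    (hQ : ∀ᵐ ω ∂μ, ∀ i, Q2 ω i ≤ Q1 ω i)
    -- (ii) F¹(ω,t,Y²,Z²) ≥ F²(ω,t,Y²,Z²) a.s.
    (hii : ∀ t < T, ∀ᵐ ω ∂μ, ∀ i,
      F2 ω t (Y2 t ω) (Z2 t ω) i ≤ F1 ω t (Y2 t ω) (Z2 t ω) i)
    -- (iii)
    (hiii : ∀ t < T, ∀ᵐ ω ∂μ, ∀ i,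
      Jmin ((μ[X (t + 1) | 𝓕 t]) ω) (fun j => Z1 t ω i j - Z2 t ω i j)
        ≤ F1 ω t (Y2 t ω) (Z1 t ω) i - F1 ω t (Y2 t ω) (Z2 t ω) i)
    -- (iv)
    (hiv : ∀ t < T, ∀ᵐ ω ∂μ,
      (∀ i, Y2 t ω i - F1 ω t (Y2 t ω) (Z1 t ω) i
          ≤ Y1 t ω i - F1 ω t (Y1 t ω) (Z1 t ω) i) →
      ∀ i, Y2 t ω i ≤ Y1 t ω i)
    -- strictness: the inequality in (iii) is strict unless e_i^* Z¹_t ∼_{M_{t+1}} e_i^* Z²_t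
    (hstrict : ∀ t < T, ∀ i : Fin K,
      ¬ ((fun ω => ∑ j, Z1 t ω i j * M (t + 1) ω j)
          =ᵐ[μ] fun ω => ∑ j, Z2 t ω i j * M (t + 1) ω j) →
      ∀ᵐ ω ∂μ,
        Jmin ((μ[X (t + 1) | 𝓕 t]) ω) (fun j => Z1 t ω i j - Z2 t ω i j)
          < F1 ω t (Y2 t ω) (Z1 t ω) i - F1 ω t (Y2 t ω) (Z2 t ω) i)
    (t : ℕ) (htT : t ≤ T)
    (A : Set Ω) (hA : MeasurableSet[𝓕 t] A)
    (hYeq : ∀ᵐ ω ∂μ, ω ∈ A → Y1 t ω = Y2 t ω) :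
    (∀ᵐ ω ∂μ, ω ∈ A → Q1 ω = Q2 ω) ∧
    (∀ s, t ≤ s → s ≤ T →
      (∀ᵐ ω ∂μ, ω ∈ A → Y1 s ω = Y2 s ω) ∧
      (s < T →
        (∀ᵐ ω ∂μ, ω ∈ A → F1 ω s (Y2 s ω) (Z2 s ω) = F2 ω s (Y2 s ω) (Z2 s ω)) ∧
        (∀ᵐ ω ∂μ, ω ∈ A →
          (fun i => ∑ j, Z1 s ω i j * M (s + 1) ω j)
            = (fun i => ∑ j, Z2 s ω i j * M (s + 1) ω j)))) := by
    classical
  have hle : ∀ s, (𝓕 s : MeasurableSpace Ω) ≤ m0 := fun s => 𝓕.le s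
  have hX01 : ∀ s, ∀ᵐ ω ∂μ, ∀ j, X s ω j = 0 ∨ X s ω j = 1 := by
    intro s
    filter_upwards with ω j
    obtain ⟨i, hi⟩ := hXval s ω
    rw [hi]
    by_cases h : j = i <;> simp [h]
  have hXex : ∀ s, ∀ᵐ ω ∂μ, ∃ j, X s ω j = 1 := by
    intro s
    filter_upwards with ω
    obtain ⟨i, hi⟩ := hXval s ω
    exact ⟨i, by rw [hi]; simp⟩
  have hMdef : ∀ s ω j, M (s+1) ω j = X (s+1) ω j - (μ[X (s+1) | 𝓕 s]) ω j := by
    intro s ω j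
    rw [hM (s+1)]
    simp
  -- one-step recursions, componentwise
  have hstep1 : ∀ s, s < T → ∀ᵐ ω ∂μ, ∀ i,
      Y1 s ω i = Y1 (s+1) ω i + F1 ω s (Y1 s ω) (Z1 s ω) i
        - ∑ j, Z1 s ω i j * M (s+1) ω j := by
    intro s hs
    filter_upwards [hsol1 s hs.le, hsol1 (s+1) hs] with ω h1 h2 i
    have e1 := congrFun h1 i
    have e2 := congrFun h2 i
    simp only [Pi.add_apply, Pi.sub_apply, Finset.sum_apply] at e1 e2
    rw [Finset.sum_eq_sum_Ico_succ_bot hs, Finset.sum_eq_sum_Ico_succ_bot hs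
      (f := fun u => (fun i => ∑ j, Z1 u ω i j * M (u + 1) ω j) i)] at e1
    linarith
  have hstep2 : ∀ s, s < T → ∀ᵐ ω ∂μ, ∀ i,
      Y2 s ω i = Y2 (s+1) ω i + F2 ω s (Y2 s ω) (Z2 s ω) i
        - ∑ j, Z2 s ω i j * M (s+1) ω j := by
    intro s hs
    filter_upwards [hsol2 s hs.le, hsol2 (s+1) hs] with ω h1 h2 i
    have e1 := congrFun h1 i
    have e2 := congrFun h2 i
    simp only [Pi.add_apply, Pi.sub_apply, Finset.sum_apply] at e1 e2
    rw [Finset.sum_eq_sum_Ico_succ_bot hs, Finset.sum_eq_sum_Ico_succ_bot hs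
      (f := fun u => (fun i => ∑ j, Z2 u ω i j * M (u + 1) ω j) i)] at e1
    linarith
  have hYT1 : ∀ᵐ ω ∂μ, Y1 T ω = Q1 ω := by
    filter_upwards [hsol1 T le_rfl] with ω h
    simpa using h
  have hYT2 : ∀ᵐ ω ∂μ, Y2 T ω = Q2 ω := by
    filter_upwards [hsol2 T le_rfl] with ω h
    simpa using h
  -- measurability of the difference rows
  have hdm : ∀ s (i : Fin K), ∀ j, Measurable[𝓕 s]
      fun ω => Z1 s ω i j - Z2 s ω i j := by
    intro s i j
    have h1 : Measurable[𝓕 s] fun ω => Z1 s ω i j :=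
      (measurable_pi_apply j).comp ((measurable_pi_apply i).comp (hZ1 s).measurable)
    have h2 : Measurable[𝓕 s] fun ω => Z2 s ω i j :=
      (measurable_pi_apply j).comp ((measurable_pi_apply i).comp (hZ2 s).measurable)
    exact h1.sub h2
  -- the martingale-difference sum identity on the argmin event
  have hdMsum : ∀ s (i : Fin K) (j : Fin N) ω, X (s+1) ω j = 1 →
      (∑ l, Z1 s ω i l * M (s+1) ω l) - (∑ l, Z2 s ω i l * M (s+1) ω l)
        = (Z1 s ω i j - Z2 s ω i j)
          - ∑ l, (Z1 s ω i l - Z2 s ω i l) * (μ[X (s+1) | 𝓕 s]) ω l := by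
    intro s i j ω hXj
    obtain ⟨i', hi'⟩ := hXval (s+1) ω
    have hji : j = i' := by
      rw [hi'] at hXj
      by_contra hne
      simp [hne] at hXj
    subst hji
    have hXeq : ∀ l, X (s+1) ω l = if l = j then 1 else 0 := fun l => congrFun hi' l
    have hMl : ∀ l, M (s+1) ω l = (if l = j then 1 else 0) - (μ[X (s+1) | 𝓕 s]) ω l := by
      intro l
      rw [hMdef s ω l, hXeq l]
    calc (∑ l, Z1 s ω i l * M (s+1) ω l) - (∑ l, Z2 s ω i l * M (s+1) ω l)
        = ∑ l, (Z1 s ω i l * M (s+1) ω l - Z2 s ω i l * M (s+1) ω l) :=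
          (Finset.sum_sub_distrib _ _).symm
      _ = ∑ l, ((if l = j then (Z1 s ω i l - Z2 s ω i l) else 0)
            - (Z1 s ω i l - Z2 s ω i l) * (μ[X (s+1) | 𝓕 s]) ω l) := by
          refine Finset.sum_congr rfl fun l _ => ?_
          rw [hMl l]
          by_cases h : l = j <;> simp [h] <;> ring
      _ = (∑ l, if l = j then (Z1 s ω i l - Z2 s ω i l) else 0)
            - ∑ l, (Z1 s ω i l - Z2 s ω i l) * (μ[X (s+1) | 𝓕 s]) ω l :=
          Finset.sum_sub_distrib _ _
      _ = (Z1 s ω i j - Z2 s ω i j)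
            - ∑ l, (Z1 s ω i l - Z2 s ω i l) * (μ[X (s+1) | 𝓕 s]) ω l := by
          simp [Finset.sum_ite_eq' Finset.univ j (fun l => Z1 s ω i l - Z2 s ω i l)]
  -- comparison theorem: Y¹ ≥ Y² at all times
  have hGstep : ∀ s, s < T → (∀ᵐ ω ∂μ, ∀ i, Y2 (s+1) ω i ≤ Y1 (s+1) ω i) →
      ∀ᵐ ω ∂μ, ∀ i, Y2 s ω i ≤ Y1 s ω i := by
    intro s hsT ih
    have key : ∀ i : Fin K, μ {ω | (Y1 s ω i - F1 ω s (Y1 s ω) (Z1 s ω) i)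
        - (Y2 s ω i - F1 ω s (Y2 s ω) (Z1 s ω) i) < 0} = 0 := by
      intro i
      by_contra hne
      have hFm1 : StronglyMeasurable[𝓕 s] (fun ω => F1 ω s (Y1 s ω) (Z1 s ω)) :=
        hFmeas F1 (by simp) s hsT (Y1 s) (Z1 s) (hY1 s) (hZ1 s)
      have hFm2 : StronglyMeasurable[𝓕 s] (fun ω => F1 ω s (Y2 s ω) (Z1 s ω)) :=
        hFmeas F1 (by simp) s hsT (Y2 s) (Z1 s) (hY2 s) (hZ1 s)
      have hGm : Measurable[𝓕 s] fun ω => (Y1 s ω i - F1 ω s (Y1 s ω) (Z1 s ω) i)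
          - (Y2 s ω i - F1 ω s (Y2 s ω) (Z1 s ω) i) := by
        have m1 : Measurable[𝓕 s] fun ω => Y1 s ω i :=
          (measurable_pi_apply i).comp (hY1 s).measurable
        have m2 : Measurable[𝓕 s] fun ω => F1 ω s (Y1 s ω) (Z1 s ω) i :=
          (measurable_pi_apply i).comp hFm1.measurable
        have m3 : Measurable[𝓕 s] fun ω => Y2 s ω i :=
          (measurable_pi_apply i).comp (hY2 s).measurable
        have m4 : Measurable[𝓕 s] fun ω => F1 ω s (Y2 s ω) (Z1 s ω) i :=
          (measurable_pi_apply i).comp hFm2.measurable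
        exact (m1.sub m2).sub (m3.sub m4)
      have hCm : MeasurableSet[𝓕 s] {ω | (Y1 s ω i - F1 ω s (Y1 s ω) (Z1 s ω) i)
          - (Y2 s ω i - F1 ω s (Y2 s ω) (Z1 s ω) i) < 0} :=
        measurableSet_lt hGm measurable_const
      obtain ⟨j, hj⟩ := exists_argmin_event (hle s) (hXint (s+1)) (hX01 (s+1))
        (hXex (s+1)) (hdm s i) hCm hne
      obtain ⟨ω, hωD, he1, he2, hge2, hge3, hge4⟩ :=
        exists_mem_of_ae hj ((hstep1 s hsT).and ((hstep2 s hsT).and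
          ((hii s hsT).and ((hiii s hsT).and ih))))
      obtain ⟨hωC, hpj, hmin, hXj⟩ := hωD
      have hJ : Jmin ((μ[X (s+1) | 𝓕 s]) ω) (fun l => Z1 s ω i l - Z2 s ω i l)
          = (Z1 s ω i j - Z2 s ω i j)
            - ∑ l, (Z1 s ω i l - Z2 s ω i l) * (μ[X (s+1) | 𝓕 s]) ω l :=
        Jmin_eq hpj hmin
      have hsum := hdMsum s i j ω hXj
      have hlt : (Y1 s ω i - F1 ω s (Y1 s ω) (Z1 s ω) i)
          - (Y2 s ω i - F1 ω s (Y2 s ω) (Z1 s ω) i) < 0 := hωC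
      have hiii' := hge3 i
      rw [hJ] at hiii'
      have e1i := he1 i
      have e2i := he2 i
      have hge2i := hge2 i
      have hge4i := hge4 i
      linarith
    have hG : ∀ᵐ ω ∂μ, ∀ i, 0 ≤ (Y1 s ω i - F1 ω s (Y1 s ω) (Z1 s ω) i)
        - (Y2 s ω i - F1 ω s (Y2 s ω) (Z1 s ω) i) := by
      rw [ae_all_iff]
      intro i
      have := (measure_eq_zero_iff_ae_notMem (μ := μ)).mp (key i)
      filter_upwards [this] with ω h
      exact not_lt.mp h
    filter_upwards [hG, hiv s hsT] with ω h1 h2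
    exact h2 fun i => by have := h1 i; linarith
  have hcomp : ∀ s, s ≤ T → ∀ᵐ ω ∂μ, ∀ i, Y2 s ω i ≤ Y1 s ω i := by
    have haux : ∀ k s, s + k = T → ∀ᵐ ω ∂μ, ∀ i, Y2 s ω i ≤ Y1 s ω i := by
      intro k
      induction k with
      | zero =>
        intro s hs
        have hsT : s = T := by omega
        subst hsT
        filter_upwards [hYT1, hYT2, hQ] with ω h1 h2 h3 i
        rw [h1, h2]
        exact h3 i
      | succ k ih =>
        intro s hs
        exact hGstep s (by omega) (ih (s+1) (by omega))
    intro s hs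
    exact haux (T - s) s (by omega)
  -- the strict one-step propagation
  have hstep : ∀ s, t ≤ s → s < T → (∀ᵐ ω ∂μ, ω ∈ A → Y1 s ω = Y2 s ω) →
      ((∀ᵐ ω ∂μ, ω ∈ A → F1 ω s (Y2 s ω) (Z2 s ω) = F2 ω s (Y2 s ω) (Z2 s ω)) ∧
       (∀ᵐ ω ∂μ, ω ∈ A → (fun i => ∑ j, Z1 s ω i j * M (s+1) ω j)
          = (fun i => ∑ j, Z2 s ω i j * M (s+1) ω j)) ∧
       (∀ᵐ ω ∂μ, ω ∈ A → Y1 (s+1) ω = Y2 (s+1) ω)) := by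
    intro s hts hsT hYs
    by_cases hA0 : μ A = 0
    · have hnA : ∀ᵐ ω ∂μ, ω ∉ A := (measure_eq_zero_iff_ae_notMem (μ := μ)).mp hA0
      exact ⟨by filter_upwards [hnA] with ω h h'; exact absurd h' h,
        by filter_upwards [hnA] with ω h h'; exact absurd h' h,
        by filter_upwards [hnA] with ω h h'; exact absurd h' h⟩
    · have hAs : MeasurableSet[𝓕 s] A := 𝓕.mono hts A hA
      have hEi : ∀ i : Fin K, (fun ω => ∑ j, Z1 s ω i j * M (s+1) ω j)
          =ᵐ[μ] fun ω => ∑ j, Z2 s ω i j * M (s+1) ω j := by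
        intro i
        by_contra hne
        have hstr := hstrict s hsT i hne
        obtain ⟨j, hj⟩ := exists_argmin_event (hle s) (hXint (s+1)) (hX01 (s+1))
          (hXex (s+1)) (hdm s i) hAs hA0
        obtain ⟨ω, hωD, he1, he2, hge2, hstr', hge4, hys⟩ :=
          exists_mem_of_ae hj ((hstep1 s hsT).and ((hstep2 s hsT).and
            ((hii s hsT).and ((hstrict s hsT i hne).and
              ((hcomp (s+1) hsT).and hYs)))))
        obtain ⟨hωA, hpj, hmin, hXj⟩ := hωD
        have hyy : Y1 s ω = Y2 s ω := hys hωA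
        have hJ : Jmin ((μ[X (s+1) | 𝓕 s]) ω) (fun l => Z1 s ω i l - Z2 s ω i l)
            = (Z1 s ω i j - Z2 s ω i j)
              - ∑ l, (Z1 s ω i l - Z2 s ω i l) * (μ[X (s+1) | 𝓕 s]) ω l :=
          Jmin_eq hpj hmin
        have hsum := hdMsum s i j ω hXj
        have e1i := he1 i
        rw [hyy] at e1i
        have e2i := he2 i
        have hstri := hstr'
        rw [hJ] at hstri
        have hge2i := hge2 i
        have hge4i := hge4 i
        have hyi : Y1 s ω i = Y2 s ω i := congrFun hyy i
        linarith
      have hEall : ∀ᵐ ω ∂μ, (fun i => ∑ j, Z1 s ω i j * M (s+1) ω j)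
          = fun i => ∑ j, Z2 s ω i j * M (s+1) ω j := by
        have h := ae_all_iff.mpr hEi
        filter_upwards [h] with ω hω
        funext i
        exact hω i
      have hf0 : ∀ᵐ ω ∂μ, F1 ω s (Y2 s ω) (Z1 s ω) = F1 ω s (Y2 s ω) (Z2 s ω) :=
        hFinv F1 (by simp) s hsT (Y2 s) (Z1 s) (Z2 s) hEall
      have hmain : ∀ᵐ ω ∂μ, ω ∈ A →
          ((∀ i, F1 ω s (Y2 s ω) (Z2 s ω) i = F2 ω s (Y2 s ω) (Z2 s ω) i) ∧
           (∀ i, Y1 (s+1) ω i = Y2 (s+1) ω i)) := by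
        filter_upwards [hstep1 s hsT, hstep2 s hsT, hii s hsT, hcomp (s+1) hsT,
          hEall, hf0, hYs] with ω e1 e2 h2 h3 hE hf hy hA'
        have hyy : Y1 s ω = Y2 s ω := hy hA'
        have hEc : ∀ i, (∑ j, Z1 s ω i j * M (s+1) ω j)
            = ∑ j, Z2 s ω i j * M (s+1) ω j := fun i => congrFun hE i
        have hkey : ∀ i, Y1 (s+1) ω i - Y2 (s+1) ω i
            + (F1 ω s (Y2 s ω) (Z2 s ω) i - F2 ω s (Y2 s ω) (Z2 s ω) i) = 0 := by
          intro i
          have e1i := e1 i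
          rw [hyy] at e1i
          have e2i := e2 i
          have hfi : F1 ω s (Y2 s ω) (Z1 s ω) i = F1 ω s (Y2 s ω) (Z2 s ω) i :=
            congrFun hf i
          have hyi : Y1 s ω i = Y2 s ω i := congrFun hyy i
          have hEi' := hEc i
          linarith
        constructor
        · intro i
          have := hkey i
          have h2i := h2 i
          have h3i := h3 i
          linarith
        · intro i
          have := hkey i
          have h2i := h2 i
          have h3i := h3 i
          linarith
      refine ⟨?_, ?_, ?_⟩
      · filter_upwards [hmain] with ω h hA'
        funext i
        exact (h hA').1 i
      · filter_upwards [hEall] with ω h _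
        exact h
      · filter_upwards [hmain] with ω h hA'
        funext i
        exact (h hA').2 i
  -- forward induction of the equality of Y on A
  have hind : ∀ s, t ≤ s → s ≤ T → ∀ᵐ ω ∂μ, ω ∈ A → Y1 s ω = Y2 s ω := by
    intro s hts
    induction s, hts using Nat.le_induction with
    | base => intro _; exact hYeq
    | succ s hts ih =>
      intro hsT
      exact (hstep s hts (by omega) (ih (by omega))).2.2
  refine ⟨?_, fun s hts hsT => ⟨hind s hts hsT, fun hsT' =>
    ⟨(hstep s hts hsT' (hind s hts hsT)).1, ?_⟩⟩⟩
  · filter_upwards [hind T htT le_rfl, hYT1, hYT2] with ω h h1 h2 hA'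
    rw [← h1, ← h2]
    exact h hA'
  · exact (hstep s hts hsT' (hind s hts hsT)).2.1
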